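/- For all natural numbers s ≥ 1, q ≥ 0, and all real x: (x²+4)·(-1)^{sq}·F_s(x)·F_s(x)·Σ_{n=0}^{q} (-1)^{sn}·n·F_{2sn}(x) = (-1)^{s+1}·F_{2sq}(x) + q·F_s(x)·L_{s(2q+1)}(x). -/

import Mathlib

/-- Fibonacci polynomials evaluated at a real `x`. -/
def fibP : ℕ → ℝ → ℝ
  | 0, _ => 0
  | 1, _ => 1
  | n + 2, x => x * fibP (n + 1) x + fibP n x

/-- Lucas polynomials evaluated at a real `x`. -/
def lucasP : ℕ → ℝ → ℝ
  | 0, _ => 2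
  | 1, x => x
  | n + 2, x => x * lucasP (n + 1) x + lucasP n x

lemma fibP_rec (x : ℝ) (n : ℕ) : fibP (n + 2) x = x * fibP (n + 1) x + fibP n x := rfl
lemma lucasP_rec (x : ℝ) (n : ℕ) : lucasP (n + 2) x = x * lucasP (n + 1) x + lucasP n x := rfl

lemma lucas_fib (x : ℝ) : ∀ n, lucasP (n + 1) x = fibP (n + 2) x + fibP n x
  | 0 => by simp [fibP, lucasP]
  | 1 => by simp [fibP, lucasP]; ring
  | n + 2 => by
    have h1 := lucas_fib x n
    have h2 := lucas_fib x (n + 1)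
    rw [show n + 2 + 1 = (n + 1) + 2 by omega, lucasP_rec, h2, h1,
      show n + 2 + 2 = (n + 2) + 2 by omega, fibP_rec x (n + 2),
      show n + 1 + 2 = (n + 1) + 2 by omega, show n + 2 + 1 = (n + 1) + 2 by omega,
      fibP_rec x n]
    ring

lemma fib_lucas (x : ℝ) : ∀ n, (x ^ 2 + 4) * fibP (n + 1) x = lucasP (n + 2) x + lucasP n x
  | 0 => by simp [fibP, lucasP]; ring
  | 1 => by simp [fibP, lucasP]; ring
  | n + 2 => by
    have h1 := fib_lucas x n
    have h2 := fib_lucas x (n + 1)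
    rw [show n + 2 + 1 = (n + 1) + 2 by omega, fibP_rec x (n + 1),
      lucasP_rec x (n + 2), lucasP_rec x n,
      show n + 2 + 1 = (n + 1) + 2 by omega]
    linear_combination x * h2 + h1 + lucasP_rec x n

lemma fib_mul_lucas (x : ℝ) : ∀ t c, fibP (c + 2 * t + 2) x =
    fibP (t + 1) x * lucasP (c + t + 1) x + (-1 : ℝ) ^ (t + 1) * fibP c x
  | 0, c => by
    have h := lucas_fib x c
    have hF1 : fibP (0 + 1) x = 1 := by norm_num [fibP]
    rw [show c + 2 * 0 + 2 = c + 2 by omega, show c + 0 + 1 = c + 1 by omega, hF1, h]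
    ring
  | 1, c => by
    have h := lucas_fib x (c + 1)
    have hF2 : fibP (1 + 1) x = x := by norm_num [fibP]
    rw [show c + 2 * 1 + 2 = (c + 2) + 2 by omega, fibP_rec x (c + 2),
      show c + 1 + 1 = c + 2 by omega, hF2, show c + 2 + 1 = c + 1 + 2 by omega, h,
      fibP_rec x c]
    ring
  | t + 2, c => by
    have h1 := fib_mul_lucas x (t + 1) (c + 1)
    have h2 := fib_mul_lucas x t (c + 2)
    have s1 : (-1 : ℝ) ^ (t + 2 + 1) = -(-1 : ℝ) ^ t := by
      rw [show t + 2 + 1 = t + 3 by omega, pow_succ, pow_succ, pow_succ]; ring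
    have s2 : (-1 : ℝ) ^ (t + 1 + 1) = (-1 : ℝ) ^ t := by
      rw [pow_succ, pow_succ]; ring
    have s3 : (-1 : ℝ) ^ (t + 1) = -(-1 : ℝ) ^ t := by rw [pow_succ]; ring
    rw [show c + 1 + 2 * (t + 1) + 2 = (c + 2 * t + 4) + 1 by omega,
      show c + 1 + (t + 1) + 1 = c + t + 3 by omega, s2] at h1
    rw [show c + 2 + 2 * t + 2 = c + 2 * t + 4 by omega,
      show c + 2 + t + 1 = c + t + 3 by omega, s3, fibP_rec x c] at h2
    rw [show c + 2 * (t + 2) + 2 = (c + 2 * t + 4) + 2 by omega, fibP_rec x (c + 2 * t + 4),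
      show c + (t + 2) + 1 = c + t + 3 by omega, s1,
      show t + 2 + 1 = (t + 1) + 2 by omega, fibP_rec x (t + 1)]
    linear_combination x * h1 + h2

lemma lucas_mul_fib (x : ℝ) : ∀ t d, (x ^ 2 + 4) * fibP (d + t + 2) x * fibP (t + 1) x =
    lucasP (d + 2 * t + 3) x + (-1 : ℝ) ^ t * lucasP (d + 1) x
  | 0, d => by
    have h := fib_lucas x (d + 1)
    have hF1 : fibP (0 + 1) x = 1 := by norm_num [fibP]
    rw [show d + 0 + 2 = d + 1 + 1 by omega, show d + 2 * 0 + 3 = d + 1 + 2 by omega, hF1, h]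
    ring
  | 1, d => by
    have h := fib_lucas x (d + 2)
    have hF2 : fibP (1 + 1) x = x := by norm_num [fibP]
    have r1 : lucasP (d + 2 * 1 + 3) x = x * lucasP (d + 2 + 2) x + lucasP (d + 2 + 1) x := by
      rw [show d + 2 * 1 + 3 = (d + 2 + 1) + 2 by omega, lucasP_rec x (d + 2 + 1),
        show d + 2 + 1 + 1 = d + 2 + 2 by omega]
    have r2 : lucasP (d + 2 + 1) x = x * lucasP (d + 2) x + lucasP (d + 1) x := by
      rw [show d + 2 + 1 = (d + 1) + 2 by omega, lucasP_rec x (d + 1),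
        show d + 1 + 1 = d + 2 by omega]
    rw [show d + 1 + 2 = d + 2 + 1 by omega, hF2, r1, r2]
    linear_combination x * h
  | t + 2, d => by
    have h1 := lucas_mul_fib x (t + 1) (d + 1)
    have h2 := lucas_mul_fib x t (d + 2)
    have s1 : (-1 : ℝ) ^ (t + 2) = (-1 : ℝ) ^ t := by rw [pow_succ, pow_succ]; ring
    have s3 : (-1 : ℝ) ^ (t + 1) = -(-1 : ℝ) ^ t := by rw [pow_succ]; ring
    have rbig : lucasP (d + 2 * (t + 2) + 3) x =
        x * lucasP (d + 2 * t + 6) x + lucasP (d + 2 * t + 5) x := by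
      rw [show d + 2 * (t + 2) + 3 = (d + 2 * t + 5) + 2 by omega, lucasP_rec x (d + 2 * t + 5),
        show d + 2 * t + 5 + 1 = d + 2 * t + 6 by omega]
    have rsmall : lucasP (d + 3) x = x * lucasP (d + 2) x + lucasP (d + 1) x := by
      rw [show d + 3 = (d + 1) + 2 by omega, lucasP_rec x (d + 1),
        show d + 1 + 1 = d + 2 by omega]
    rw [show d + 1 + (t + 1) + 2 = d + t + 4 by omega,
      show d + 1 + 2 * (t + 1) + 3 = d + 2 * t + 6 by omega, s3,
      show d + 1 + 1 = d + 2 by omega] at h1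
    rw [show d + 2 + t + 2 = d + t + 4 by omega,
      show d + 2 + 2 * t + 3 = d + 2 * t + 5 by omega,
      show d + 2 + 1 = d + 3 by omega, rsmall] at h2
    rw [show d + (t + 2) + 2 = d + t + 4 by omega, rbig, s1,
      show t + 2 + 1 = (t + 1) + 2 by omega, fibP_rec x (t + 1)]
    linear_combination x * h1 + h2

theorem stmt_16 (s q : ℕ) (hs : 1 ≤ s) (x : ℝ) :
    (x ^ 2 + 4) * (-1 : ℝ) ^ (s * q) * fibP s x * fibP s x *
        ∑ n ∈ Finset.range (q + 1), (-1 : ℝ) ^ (s * n) * (n : ℝ) * fibP (2 * s * n) x =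
      (-1 : ℝ) ^ (s + 1) * fibP (2 * s * q) x + (q : ℝ) * fibP s x * lucasP (s * (2 * q + 1)) x := by
  obtain ⟨t, rfl⟩ : ∃ t, s = t + 1 := ⟨s - 1, by omega⟩
  induction q with
  | zero => simp [fibP]
  | succ q ih =>
    rw [Finset.sum_range_succ]
    have h3 := lucas_mul_fib x t (2 * t * q + 2 * q + t)
    have h4 := fib_mul_lucas x t (2 * (t + 1) * q)
    have s3 : (-1 : ℝ) ^ t = -(-1 : ℝ) ^ (t + 1) := by rw [pow_succ]; ring
    have s4 : (-1 : ℝ) ^ (t + 1 + 1) = -(-1 : ℝ) ^ (t + 1) := by rw [pow_succ]; ring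
    rw [show 2 * t * q + 2 * q + t + t + 2 = 2 * (t + 1) * (q + 1) by ring,
        show 2 * t * q + 2 * q + t + 2 * t + 3 = (t + 1) * (2 * (q + 1) + 1) by ring,
        show 2 * t * q + 2 * q + t + 1 = (t + 1) * (2 * q + 1) by ring, s3] at h3
    rw [show 2 * (t + 1) * q + 2 * t + 2 = 2 * (t + 1) * (q + 1) by ring,
        show 2 * (t + 1) * q + t + 1 = (t + 1) * (2 * q + 1) by ring] at h4
    rw [s4] at ih ⊢
    rw [show (t + 1) * (q + 1) = (t + 1) * q + (t + 1) by ring, pow_add]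
    have hp1 : ((-1 : ℝ) ^ ((t + 1) * q)) ^ 2 = 1 := by
      rw [← pow_mul, mul_comm, pow_mul]; norm_num
    have hp2 : ((-1 : ℝ) ^ (t + 1)) ^ 2 = 1 := by
      rw [← pow_mul, mul_comm, pow_mul]; norm_num
    push_cast
    linear_combination ((-1 : ℝ) ^ (t + 1)) * ih +
      ((q : ℝ) + 1) * fibP (t + 1) x * h3 + ((-1 : ℝ) ^ (t + 1)) * h4 +
      (x ^ 2 + 4) * ((q : ℝ) + 1) * fibP (t + 1) x * fibP (t + 1) x *
        fibP (2 * (t + 1) * (q + 1)) x * (((-1 : ℝ) ^ (t + 1)) ^ 2) * hp1 +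
      (x ^ 2 + 4) * ((q : ℝ) + 1) * fibP (t + 1) x * fibP (t + 1) x *
        fibP (2 * (t + 1) * (q + 1)) x * hp2
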